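/- Let M = (E, ρ) be a simple binary matroid. A cyclic flat Z of M is an atom of the lattice of cyclic flats Z(M) (that is, Z ≠ ∅ and there is no cyclic flat Z' with ∅ ⊊ Z' ⊊ Z) if and only if η(Z) = 1, where η(Z) = |Z| − ρ(Z). -/

import Mathlib

open Finset

structure FinMatroid (α : Type*) [DecidableEq α] where
  E : Finset α
  rk : Finset α → ℕ
  rk_le_card : ∀ A, A ⊆ E → rk A ≤ A.card
  rk_mono : ∀ A B, A ⊆ B → B ⊆ E → rk A ≤ rk B
  rk_submod : ∀ A B, A ⊆ E → B ⊆ E → rk (A ∪ B) + rk (A ∩ B) ≤ rk A + rk B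

namespace FinMatroid

variable {α : Type*} [DecidableEq α]

/-- The closure operator `cl(A) = {e ∈ E : ρ(A ∪ {e}) = ρ(A)}`. -/
def cl (M : FinMatroid α) (A : Finset α) : Finset α :=
  M.E.filter fun e => M.rk (insert e A) = M.rk A

/-- The cyclic operator `cyc(A) = {e ∈ A : ρ(A − {e}) = ρ(A)}`. -/
def cyc (M : FinMatroid α) (A : Finset α) : Finset α :=
  A.filter fun e => M.rk (A.erase e) = M.rk A

/-- A flat is a set fixed by the closure operator. -/
def IsFlat (M : FinMatroid α) (F : Finset α) : Prop :=
  F ⊆ M.E ∧ M.cl F = F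

/-- A cyclic set is a set fixed by the cyclic operator. -/
def IsCyclic (M : FinMatroid α) (U : Finset α) : Prop :=
  U ⊆ M.E ∧ M.cyc U = U

/-- A cyclic flat is a set fixed by both the closure and the cyclic operators. -/
def IsCyclicFlat (M : FinMatroid α) (Z : Finset α) : Prop :=
  Z ⊆ M.E ∧ M.cl Z = Z ∧ M.cyc Z = Z

/-- The minor `M|Y/X`: restriction to `Y` followed by contraction of `X`. -/
def minor (M : FinMatroid α) (X Y : Finset α) (hXY : X ⊆ Y) (hY : Y ⊆ M.E) :
    FinMatroid α where
  E := Y \ X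
  rk A := M.rk (A ∪ X) - M.rk X
  rk_le_card := by
    intro A hA
    have hAE : A ⊆ M.E := fun a ha => hY (mem_sdiff.mp (hA ha)).1
    have hXE : X ⊆ M.E := hXY.trans hY
    have h1 := M.rk_submod A X hAE hXE
    have h2 := M.rk_le_card A hAE
    show M.rk (A ∪ X) - M.rk X ≤ A.card
    omega
  rk_mono := by
    intro A B hAB hB
    have hBE : B ⊆ M.E := fun a ha => hY (mem_sdiff.mp (hB ha)).1
    have hBX : B ∪ X ⊆ M.E := union_subset hBE (hXY.trans hY)
    have := M.rk_mono (A ∪ X) (B ∪ X) (union_subset_union hAB Subset.rfl) hBX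
    show M.rk (A ∪ X) - M.rk X ≤ M.rk (B ∪ X) - M.rk X
    omega
  rk_submod := by
    intro A B hA hB
    have hAE : A ⊆ M.E := fun a ha => hY (mem_sdiff.mp (hA ha)).1
    have hBE : B ⊆ M.E := fun a ha => hY (mem_sdiff.mp (hB ha)).1
    have hXE : X ⊆ M.E := hXY.trans hY
    have hAX : A ∪ X ⊆ M.E := union_subset hAE hXE
    have hBX : B ∪ X ⊆ M.E := union_subset hBE hXE
    have hsub := M.rk_submod (A ∪ X) (B ∪ X) hAX hBX
    have e1 : (A ∪ X) ∪ (B ∪ X) = (A ∪ B) ∪ X := by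
      ext x; simp only [mem_union]; tauto
    have e2 : (A ∪ X) ∩ (B ∪ X) = (A ∩ B) ∪ X := by
      ext x; simp only [mem_union, mem_inter]; tauto
    rw [e1, e2] at hsub
    have h1 : M.rk X ≤ M.rk (A ∪ X) := M.rk_mono X _ subset_union_right hAX
    have h2 : M.rk X ≤ M.rk (B ∪ X) := M.rk_mono X _ subset_union_right hBX
    have hIX : (A ∩ B) ∪ X ⊆ M.E := union_subset (inter_subset_left.trans hAE) hXE
    have hUX : (A ∪ B) ∪ X ⊆ M.E := union_subset (union_subset hAE hBE) hXE
    have h3 : M.rk X ≤ M.rk ((A ∩ B) ∪ X) := M.rk_mono X _ subset_union_right hIX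
    have h4 : M.rk X ≤ M.rk ((A ∪ B) ∪ X) := M.rk_mono X _ subset_union_right hUX
    show M.rk ((A ∪ B) ∪ X) - M.rk X + (M.rk ((A ∩ B) ∪ X) - M.rk X) ≤
      (M.rk (A ∪ X) - M.rk X) + (M.rk (B ∪ X) - M.rk X)
    omega

/-- The restriction `M|Y`. -/
def restrict (M : FinMatroid α) (Y : Finset α) (hY : Y ⊆ M.E) : FinMatroid α where
  E := Y
  rk := M.rk
  rk_le_card := fun A hA => M.rk_le_card A (hA.trans hY)
  rk_mono := fun A B hAB hB => M.rk_mono A B hAB (hB.trans hY)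
  rk_submod := fun A B hA hB => M.rk_submod A B (hA.trans hY) (hB.trans hY)

/-- `M` is binary: it is the matroid of linear dependence of a family of
vectors over the field with two elements. -/
def IsBinary (M : FinMatroid α) : Prop :=
  ∃ (m : ℕ) (φ : α → (Fin m → ZMod 2)),
    ∀ A : Finset α, A ⊆ M.E →
      M.rk A = Module.finrank (ZMod 2) (Submodule.span (ZMod 2) (φ '' (A : Set α)))

def Simple (M : FinMatroid α) : Prop :=
  (∀ e ∈ M.E, M.rk {e} = 1) ∧
    ∀ e ∈ M.E, ∀ f ∈ M.E, e ≠ f → M.rk ({e, f} : Finset α) = 2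

def NoIsthmus (M : FinMatroid α) : Prop :=
  ∀ e ∈ M.E, M.rk (M.E.erase e) = M.rk M.E

def IsMinDist (M : FinMatroid α) (d : ℕ) : Prop :=
  (∃ X ⊆ M.E, M.rk (M.E \ X) < M.rk M.E ∧ X.card = d) ∧
    ∀ X ⊆ M.E, M.rk (M.E \ X) < M.rk M.E → d ≤ X.card

def IsAtomCF (M : FinMatroid α) (Z : Finset α) : Prop :=
  M.IsCyclicFlat Z ∧ Z ≠ ∅ ∧ ¬ ∃ Z', M.IsCyclicFlat Z' ∧ ∅ ⊂ Z' ∧ Z' ⊂ Z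

def IsCoatomCF (M : FinMatroid α) (Z : Finset α) : Prop :=
  M.IsCyclicFlat Z ∧ Z ⊂ M.E ∧ ¬ ∃ Z', M.IsCyclicFlat Z' ∧ Z ⊂ Z' ∧ Z' ⊂ M.E

def IsCircuit (M : FinMatroid α) (C : Finset α) : Prop :=
  C ⊆ M.E ∧ M.rk C < C.card ∧ ∀ D ⊂ C, M.rk D = D.card

end FinMatroid



open Finset Submodule Module

namespace FinMatroid

variable {α : Type*} [DecidableEq α] (M : FinMatroid α)

lemma rk_empty' : M.rk ∅ = 0 :=
  Nat.le_zero.mp (by simpa using M.rk_le_card ∅ (Finset.empty_subset _))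

lemma rk_insert_le' {A : Finset α} {e : α} (hA : A ⊆ M.E) (he : e ∈ M.E) :
    M.rk (insert e A) ≤ M.rk A + 1 := by
  have h1 : M.rk ({e} : Finset α) ≤ 1 := by
    simpa using M.rk_le_card {e} (by simpa using he)
  have h2 := M.rk_submod A {e} hA (by simpa using he)
  have h3 : A ∪ {e} = insert e A := by rw [Finset.union_comm]; rfl
  rw [h3] at h2
  omega

lemma rk_le_add' {A B : Finset α} (hAB : A ⊆ B) (hB : B ⊆ M.E) :
    M.rk B ≤ M.rk A + (B.card - A.card) := by
  have key : ∀ n : ℕ, ∀ A : Finset α, A ⊆ B → B.card ≤ A.card + n → M.rk B ≤ M.rk A + n := by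
    intro n
    induction n with
    | zero =>
      intro A hAB hcard
      have : A = B := Finset.eq_of_subset_of_card_le hAB (by omega)
      subst this; omega
    | succ n ih =>
      intro A hAB hcard
      by_cases hBA : B ⊆ A
      · have : A = B := Finset.Subset.antisymm hAB hBA
        subst this; omega
      · obtain ⟨e, heB, heA⟩ := Finset.not_subset.mp hBA
        have hA' : insert e A ⊆ B := Finset.insert_subset heB hAB
        have hcard' : B.card ≤ (insert e A).card + n := by
          rw [Finset.card_insert_of_notMem heA]; omega
        have h1 := ih (insert e A) hA' hcard'
        have h2 := M.rk_insert_le' (hAB.trans hB) (hB heB)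
        omega
  have hc := Finset.card_le_card hAB
  exact key (B.card - A.card) A hAB (by omega)

lemma mem_cl' {A : Finset α} {e : α} :
    e ∈ M.cl A ↔ e ∈ M.E ∧ M.rk (insert e A) = M.rk A := Finset.mem_filter

lemma subset_cl' {A : Finset α} (hA : A ⊆ M.E) : A ⊆ M.cl A := by
  intro e he
  exact (M.mem_cl').mpr ⟨hA he, by rw [Finset.insert_eq_self.mpr he]⟩

lemma cl_subset_E' {A : Finset α} : M.cl A ⊆ M.E := Finset.filter_subset _ _

lemma rk_union_of_subset_cl' {A : Finset α} (hA : A ⊆ M.E) :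
    ∀ T, T ⊆ M.cl A → M.rk (A ∪ T) = M.rk A := by
  intro T
  induction T using Finset.induction_on with
  | empty => intro _; rw [Finset.union_empty]
  | @insert e T heT ih =>
    intro hT
    have he := hT (Finset.mem_insert_self e T)
    obtain ⟨heE, herk⟩ := (M.mem_cl').mp he
    have hTcl : T ⊆ M.cl A := (Finset.subset_insert e T).trans hT
    have hAT : M.rk (A ∪ T) = M.rk A := ih hTcl
    have hATE : A ∪ T ⊆ M.E := Finset.union_subset hA (hTcl.trans M.cl_subset_E')
    have heAE : insert e A ⊆ M.E := Finset.insert_subset heE hA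
    have hsub := M.rk_submod (A ∪ T) (insert e A) hATE heAE
    have hu : (A ∪ T) ∪ insert e A = insert e (A ∪ T) := by
      ext x; simp only [Finset.mem_union, Finset.mem_insert]; tauto
    have hiE : (A ∪ T) ∩ insert e A ⊆ M.E := (Finset.inter_subset_left).trans hATE
    have hi : A ⊆ (A ∪ T) ∩ insert e A := by
      intro x hx
      exact Finset.mem_inter.mpr ⟨Finset.mem_union_left _ hx, Finset.mem_insert_of_mem hx⟩
    have h2 : M.rk A ≤ M.rk ((A ∪ T) ∩ insert e A) := M.rk_mono _ _ hi hiE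
    have h3 : M.rk (A ∪ T) ≤ M.rk (insert e (A ∪ T)) :=
      M.rk_mono _ _ (Finset.subset_insert _ _) (Finset.insert_subset heE hATE)
    rw [hu] at hsub
    have hgoal : M.rk (insert e (A ∪ T)) = M.rk A := by omega
    have : A ∪ insert e T = insert e (A ∪ T) := Finset.union_insert e A T
    rw [this, hgoal]

lemma rk_cl' {A : Finset α} (hA : A ⊆ M.E) : M.rk (M.cl A) = M.rk A := by
  have h := M.rk_union_of_subset_cl' hA (M.cl A) (Finset.Subset.refl _)
  rwa [Finset.union_eq_right.mpr (M.subset_cl' hA)] at h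

lemma cl_idem' {A : Finset α} (hA : A ⊆ M.E) : M.cl (M.cl A) = M.cl A := by
  apply Finset.Subset.antisymm
  · intro e he
    obtain ⟨heE, herk⟩ := (M.mem_cl').mp he
    rw [M.rk_cl' hA] at herk
    have h1 : M.rk (insert e A) ≤ M.rk (insert e (M.cl A)) :=
      M.rk_mono _ _ (Finset.insert_subset_insert _ (M.subset_cl' hA))
        (Finset.insert_subset heE M.cl_subset_E')
    have h2 : M.rk A ≤ M.rk (insert e A) :=
      M.rk_mono _ _ (Finset.subset_insert _ _) (Finset.insert_subset heE hA)
    exact (M.mem_cl').mpr ⟨heE, by omega⟩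
  · exact M.subset_cl' M.cl_subset_E'


lemma cl_mono' {A B : Finset α} (hAB : A ⊆ B) (hB : B ⊆ M.E) : M.cl A ⊆ M.cl B := by
  intro e he
  obtain ⟨heE, herk⟩ := (M.mem_cl').mp he
  have hA : A ⊆ M.E := hAB.trans hB
  have hsub := M.rk_submod (insert e A) B (Finset.insert_subset heE hA) hB
  have hu : insert e A ∪ B = insert e B := by
    ext x
    have := @hAB x
    simp only [Finset.mem_union, Finset.mem_insert]
    tauto
  have hi : A ⊆ insert e A ∩ B := by
    intro x hx
    exact Finset.mem_inter.mpr ⟨Finset.mem_insert_of_mem hx, hAB hx⟩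
  have hiE : insert e A ∩ B ⊆ M.E := Finset.inter_subset_right.trans hB
  have h2 : M.rk A ≤ M.rk (insert e A ∩ B) := M.rk_mono _ _ hi hiE
  have h3 : M.rk B ≤ M.rk (insert e B) :=
    M.rk_mono _ _ (Finset.subset_insert _ _) (Finset.insert_subset heE hB)
  rw [hu] at hsub
  exact (M.mem_cl').mpr ⟨heE, by omega⟩

lemma cyc_eq_self_iff' {U : Finset α} :
    M.cyc U = U ↔ ∀ e ∈ U, M.rk (U.erase e) = M.rk U := Finset.filter_eq_self

lemma cl_isCyclicFlat' {U : Finset α} (hU : U ⊆ M.E)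
    (hcyc : ∀ e ∈ U, M.rk (U.erase e) = M.rk U) : M.IsCyclicFlat (M.cl U) := by
  refine ⟨M.cl_subset_E', M.cl_idem' hU, (M.cyc_eq_self_iff').mpr ?_⟩
  intro e he
  have hrkcl : M.rk (M.cl U) = M.rk U := M.rk_cl' hU
  have hersub : (M.cl U).erase e ⊆ M.E := (Finset.erase_subset _ _).trans M.cl_subset_E'
  have hle : M.rk ((M.cl U).erase e) ≤ M.rk (M.cl U) :=
    M.rk_mono _ _ (Finset.erase_subset _ _) M.cl_subset_E'
  by_cases heU : e ∈ U
  · have h1 : U.erase e ⊆ (M.cl U).erase e :=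
      Finset.erase_subset_erase _ (M.subset_cl' hU)
    have h2 : M.rk (U.erase e) ≤ M.rk ((M.cl U).erase e) := M.rk_mono _ _ h1 hersub
    have h3 := hcyc e heU
    omega
  · have h1 : U ⊆ (M.cl U).erase e := Finset.subset_erase.mpr ⟨M.subset_cl' hU, heU⟩
    have h2 : M.rk U ≤ M.rk ((M.cl U).erase e) := M.rk_mono _ _ h1 hersub
    omega

end FinMatroid

section Binary

open FinMatroid Module

variable {α : Type*} [DecidableEq α] (M : FinMatroid α) {m : ℕ} {φ : α → Fin m → ZMod 2}

/-- L1: rank doesn't grow on insert iff the vector is in the span. -/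
lemma rk_insert_eq_iff
    (hr : ∀ A : Finset α, A ⊆ M.E →
      M.rk A = finrank (ZMod 2) (span (ZMod 2) (φ '' (A : Set α))))
    {A : Finset α} {e : α} (hA : A ⊆ M.E) (he : e ∈ M.E) :
    M.rk (insert e A) = M.rk A ↔ φ e ∈ span (ZMod 2) (φ '' (A : Set α)) := by
  have himg : (φ '' ((insert e A : Finset α) : Set α)) = insert (φ e) (φ '' (A : Set α)) := by
    rw [Finset.coe_insert, Set.image_insert_eq]
  have hrins := hr (insert e A) (Finset.insert_subset he hA)
  rw [himg] at hrins
  have hrA := hr A hA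
  constructor
  · intro h
    have hle : span (ZMod 2) (φ '' (A : Set α)) ≤
        span (ZMod 2) (insert (φ e) (φ '' (A : Set α))) :=
      span_mono (Set.subset_insert _ _)
    have heq : span (ZMod 2) (φ '' (A : Set α)) =
        span (ZMod 2) (insert (φ e) (φ '' (A : Set α))) :=
      Submodule.eq_of_le_of_finrank_le hle (by omega)
    rw [heq]
    exact subset_span (Set.mem_insert _ _)
  · intro h
    rw [Submodule.span_insert_eq_span h] at hrins
    omega

/-- C': over GF(2), span membership gives a subset sum. -/
lemma span_mem_to_sum {A : Finset α}
    (hinj : ∀ x ∈ A, ∀ y ∈ A, φ x = φ y → x = y) {v : Fin m → ZMod 2}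
    (hv : v ∈ span (ZMod 2) (φ '' (A : Set α))) :
    ∃ D, D ⊆ A ∧ ∑ x ∈ D, φ x = v := by
  classical
  rw [show (φ '' (A : Set α)) = ((A.image φ : Finset _) : Set (Fin m → ZMod 2)) from
    (Finset.coe_image).symm, mem_span_finset] at hv
  obtain ⟨f, hf⟩ := hv
  rw [Finset.sum_image hinj] at hf
  refine ⟨A.filter (fun x => f (φ x) = 1), Finset.filter_subset _ _, ?_⟩
  rw [Finset.sum_filter, ← hf.2]
  apply Finset.sum_congr rfl
  intro x _
  have h2 : f (φ x) = 0 ∨ f (φ x) = 1 := by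
    have : ∀ a : ZMod 2, a = 0 ∨ a = 1 := by decide
    exact this _
  rcases h2 with h | h <;> simp [h]

end Binary

/-- In a simple binary matroid, a cyclic flat `Z` is an atom of the
lattice of cyclic flats iff `η(Z) = |Z| − ρ(Z) = 1`. -/
theorem atom_iff_nullity_one {α : Type*} [DecidableEq α] (M : FinMatroid α)
    (hs : M.Simple) (hb : M.IsBinary) (Z : Finset α) (hZ : M.IsCyclicFlat Z) :
    (Z ≠ ∅ ∧ ¬ ∃ Z', M.IsCyclicFlat Z' ∧ ∅ ⊂ Z' ∧ Z' ⊂ Z) ↔ Z.card - M.rk Z = 1 := by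
  classical
  obtain ⟨hZE, hZcl, hZcyc⟩ := hZ
  have hZcycP : ∀ e ∈ Z, M.rk (Z.erase e) = M.rk Z := (M.cyc_eq_self_iff').mp hZcyc
  have hrkle : M.rk Z ≤ Z.card := M.rk_le_card Z hZE
  obtain ⟨m, φ, hr⟩ := hb
  have hφinj : ∀ x ∈ M.E, ∀ y ∈ M.E, φ x = φ y → x = y := by
    intro x hx y hy hxy
    by_contra hne
    have h2 := hs.2 x hx y hy hne
    have himg : (φ '' (({x, y} : Finset α) : Set α)) = {φ y} := by
      rw [Finset.coe_insert, Finset.coe_singleton, Set.image_insert_eq, Set.image_singleton,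
        hxy, Set.pair_eq_singleton]
    have hxyE : ({x, y} : Finset α) ⊆ M.E := by
      intro z hz
      rcases Finset.mem_insert.mp hz with rfl | hz
      · exact hx
      · rw [Finset.mem_singleton.mp hz]; exact hy
    have h3 := hr {x, y} hxyE
    rw [himg] at h3
    have h4 := hr {y} (by simpa using hy)
    rw [Finset.coe_singleton, Set.image_singleton] at h4
    have h5 := hs.1 y hy
    omega
  constructor
  · rintro ⟨hZne, hNoMid⟩
    obtain ⟨e0, he0⟩ := Finset.nonempty_iff_ne_empty.mpr hZne
    have hpos : 0 < Z.card := Finset.card_pos.mpr ⟨e0, he0⟩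
    have h1 : M.rk Z + 1 ≤ Z.card := by
      have h := M.rk_le_card (Z.erase e0) ((Finset.erase_subset _ _).trans hZE)
      rw [hZcycP e0 he0, Finset.card_erase_of_mem he0] at h
      omega
    by_contra hne1
    have h2 : M.rk Z + 2 ≤ Z.card := by omega
    -- minimal dependent subset C of Z
    have hSne : (Z.powerset.filter (fun D => D.Nonempty ∧ M.rk D < D.card)).Nonempty :=
      ⟨Z, Finset.mem_filter.mpr ⟨Finset.mem_powerset.mpr (Finset.Subset.refl _),
        ⟨e0, he0⟩, by omega⟩⟩
    obtain ⟨C, hCmem, hCmin⟩ := Finset.exists_min_image _ Finset.card hSne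
    have hCmem' := Finset.mem_filter.mp hCmem
    have hCZ : C ⊆ Z := Finset.mem_powerset.mp hCmem'.1
    have hCne : C.Nonempty := hCmem'.2.1
    have hCdep : M.rk C < C.card := hCmem'.2.2
    have hCE : C ⊆ M.E := hCZ.trans hZE
    have hmin : ∀ D, D ⊆ Z → M.rk D < D.card → C.card ≤ D.card := by
      intro D hDZ hdep
      have hDne : D.Nonempty := by
        rcases Finset.eq_empty_or_nonempty D with h | h
        · subst h; rw [M.rk_empty', Finset.card_empty] at hdep; omega
        · exact h
      exact hCmin D (Finset.mem_filter.mpr ⟨Finset.mem_powerset.mpr hDZ, hDne, hdep⟩)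
    have hCer : ∀ c ∈ C, M.rk (C.erase c) = C.card - 1 := by
      intro c hc
      have hsub : C.erase c ⊆ Z := (Finset.erase_subset _ _).trans hCZ
      have hle := M.rk_le_card (C.erase c) (hsub.trans hZE)
      have hcard := Finset.card_erase_of_mem hc
      by_contra hne
      have hdep : M.rk (C.erase c) < (C.erase c).card := by omega
      have := hmin _ hsub hdep
      omega
    obtain ⟨c0, hc0⟩ := hCne
    have hCpos : 0 < C.card := Finset.card_pos.mpr ⟨c0, hc0⟩
    have hrkC : M.rk C = C.card - 1 := by
      have ha := hCer c0 hc0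
      have hb2 : M.rk (C.erase c0) ≤ M.rk C := M.rk_mono _ _ (Finset.erase_subset _ _) hCE
      omega
    have hCcyc : ∀ c ∈ C, M.rk (C.erase c) = M.rk C := by
      intro c hc; rw [hCer c hc, hrkC]
    have hinjC : ∀ x ∈ C, ∀ y ∈ C, φ x = φ y → x = y :=
      fun x hx y hy => hφinj x (hCE hx) y (hCE hy)
    have haddself : ∀ v : Fin m → ZMod 2, v + v = 0 := by
      intro v
      have h20 : (2 : ZMod 2) = 0 := by decide
      calc v + v = (2 : ZMod 2) • v := (two_smul _ _).symm
        _ = 0 := by rw [h20, zero_smul]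
    -- sum over C is zero
    have hstep : M.rk (insert c0 (C.erase c0)) = M.rk (C.erase c0) := by
      rw [Finset.insert_erase hc0, hCcyc c0 hc0]
    have hc0span := (rk_insert_eq_iff M hr ((Finset.erase_subset c0 C).trans hCE)
      (hCE hc0)).mp hstep
    obtain ⟨D1, hD1sub, hD1sum⟩ := span_mem_to_sum (φ := φ)
      (fun x hx y hy => hinjC x (Finset.mem_of_mem_erase hx) y (Finset.mem_of_mem_erase hy))
      hc0span
    have hc0D1 : c0 ∉ D1 := fun h => Finset.notMem_erase c0 C (hD1sub h)
    have hsumD0 : ∑ x ∈ insert c0 D1, φ x = 0 := by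
      rw [Finset.sum_insert hc0D1, hD1sum, haddself]
    have hD0C : insert c0 D1 ⊆ C :=
      Finset.insert_subset hc0 (hD1sub.trans (Finset.erase_subset _ _))
    have hD0dep : M.rk (insert c0 D1) < (insert c0 D1).card := by
      have hspan : φ c0 ∈ Submodule.span (ZMod 2) (φ '' (D1 : Set α)) := by
        rw [← hD1sum]
        exact Submodule.sum_mem _ (fun x hx => Submodule.subset_span ⟨x, by simpa using hx, rfl⟩)
      have hD1E : D1 ⊆ M.E := (hD1sub.trans (Finset.erase_subset _ _)).trans hCE
      have ha : M.rk (insert c0 D1) = M.rk D1 :=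
        (rk_insert_eq_iff M hr hD1E (hCE hc0)).mpr hspan
      have hb2 := M.rk_le_card D1 hD1E
      rw [ha, Finset.card_insert_of_notMem hc0D1]
      omega
    have hD0eq : insert c0 D1 = C :=
      Finset.eq_of_subset_of_card_le hD0C (hmin _ (hD0C.trans hCZ) hD0dep)
    have hsumC : ∑ x ∈ C, φ x = 0 := hD0eq ▸ hsumD0
    have hrkCZ : M.rk C ≤ M.rk Z := M.rk_mono _ _ hCZ hZE
    -- produce small cyclic U
    obtain ⟨U, hUZ, hUne, hUcyc, hUrk⟩ :
        ∃ U, U ⊆ Z ∧ U.Nonempty ∧ (∀ e ∈ U, M.rk (U.erase e) = M.rk U) ∧ M.rk U < M.rk Z := by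
      by_cases hcase : M.rk C < M.rk Z
      · exact ⟨C, hCZ, ⟨c0, hc0⟩, hCcyc, hcase⟩
      · have hCZrk : M.rk C = M.rk Z := by omega
        have hcardC : C.card = M.rk Z + 1 := by omega
        have hfex : ∃ f ∈ Z, f ∉ C := by
          by_contra h
          push_neg at h
          have := Finset.card_le_card h
          omega
        obtain ⟨f, hfZ, hfC⟩ := hfex
        have hfE : f ∈ M.E := hZE hfZ
        have hins : M.rk (insert f C) = M.rk C := by
          have hle1 : M.rk C ≤ M.rk (insert f C) :=
            M.rk_mono _ _ (Finset.subset_insert _ _) (Finset.insert_subset hfE hCE)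
          have hle2 : M.rk (insert f C) ≤ M.rk Z :=
            M.rk_mono _ _ (Finset.insert_subset hfZ hCZ) hZE
          omega
        have hfspan := (rk_insert_eq_iff M hr hCE hfE).mp hins
        obtain ⟨Dw, hDwsub, hDwsum⟩ := span_mem_to_sum (φ := φ) hinjC hfspan
        have hQne : (C.powerset.filter (fun D => D ⊆ C ∧ ∑ x ∈ D, φ x = φ f)).Nonempty :=
          ⟨Dw, Finset.mem_filter.mpr ⟨Finset.mem_powerset.mpr hDwsub, hDwsub, hDwsum⟩⟩
        obtain ⟨D, hDmem, hDmin⟩ := Finset.exists_min_image _ Finset.card hQne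
        obtain ⟨hDC, hDsum⟩ : D ⊆ C ∧ ∑ x ∈ D, φ x = φ f := (Finset.mem_filter.mp hDmem).2
        have hDmin' : ∀ D', D' ⊆ C → ∑ x ∈ D', φ x = φ f → D.card ≤ D'.card := by
          intro D' ha hb2
          exact hDmin D' (Finset.mem_filter.mpr ⟨Finset.mem_powerset.mpr ha, ha, hb2⟩)
        have hfD : f ∉ D := fun h => hfC (hDC h)
        have hDE : D ⊆ M.E := hDC.trans hCE
        have hDlt : D.card + 2 ≤ C.card := by
          by_contra hcon
          push_neg at hcon
          have hDcardle := Finset.card_le_card hDC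
          by_cases hDeq : D = C
          · rw [hDeq, hsumC] at hDsum
            have ha := hr {f} (by simpa using hfE)
            rw [Finset.coe_singleton, Set.image_singleton, ← hDsum,
              Submodule.span_zero_singleton, finrank_bot] at ha
            have hb2 := hs.1 f hfE
            omega
          · obtain ⟨c, hcC, hcD⟩ : ∃ c ∈ C, c ∉ D := by
              by_contra h
              push_neg at h
              exact hDeq (Finset.Subset.antisymm hDC h)
            have hDcard : D.card = C.card - 1 := by
              have hne : D.card ≠ C.card :=
                fun h => hDeq (Finset.eq_of_subset_of_card_le hDC (by omega))
              omega
            have hDer : D = C.erase c := by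
              apply Finset.eq_of_subset_of_card_le (Finset.subset_erase.mpr ⟨hDC, hcD⟩)
              rw [Finset.card_erase_of_mem hcC]
              omega
            have hsum2 : φ f + φ c = 0 := by
              rw [← hDsum, hDer, Finset.sum_erase_add C φ hcC, hsumC]
            have hfc : φ f = φ c := by
              have ha : φ f = (φ f + φ c) + φ c := by
                rw [add_assoc, haddself, add_zero]
              rw [hsum2, zero_add] at ha
              exact ha
            have hfcne : f ≠ c := fun h => hfC (h ▸ hcC)
            exact hfcne (hφinj f hfE c (hCE hcC) hfc)
        have hrkD : M.rk (insert f D) = M.rk D :=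
          (rk_insert_eq_iff M hr hDE hfE).mpr (by
            rw [← hDsum]
            exact Submodule.sum_mem _ (fun x hx => Submodule.subset_span ⟨x, by simpa using hx, rfl⟩))
        refine ⟨insert f D, Finset.insert_subset hfZ (hDC.trans hCZ),
          ⟨f, Finset.mem_insert_self _ _⟩, ?_, ?_⟩
        · intro e he
          rcases Finset.mem_insert.mp he with rfl | heD
          · rw [Finset.erase_insert hfD, hrkD]
          · have hfe : f ≠ e := fun h => hfD (h ▸ heD)
            rw [Finset.erase_insert_of_ne hfe]
            have hDeE : D.erase e ⊆ M.E := (Finset.erase_subset _ _).trans hDE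
            have hup : M.rk (insert f (D.erase e)) ≤ M.rk (insert f D) :=
              M.rk_mono _ _ (Finset.insert_subset_insert _ (Finset.erase_subset _ _))
                (Finset.insert_subset hfE hDE)
            have hlow : M.rk (D.erase e) ≤ M.rk (insert f (D.erase e)) :=
              M.rk_mono _ _ (Finset.subset_insert _ _) (Finset.insert_subset hfE hDeE)
            have hD2 : M.rk D ≤ M.rk (D.erase e) + 1 := by
              have h := M.rk_insert_le' hDeE (hDE heD)
              rwa [Finset.insert_erase heD] at h
            have hne2 : M.rk (insert f (D.erase e)) ≠ M.rk (D.erase e) := by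
              intro hcon
              have hspan := (rk_insert_eq_iff M hr hDeE hfE).mp hcon
              obtain ⟨D', hD'sub, hD'sum⟩ := span_mem_to_sum (φ := φ)
                (fun x hx y hy => hinjC x (hDC (Finset.mem_of_mem_erase hx))
                  y (hDC (Finset.mem_of_mem_erase hy))) hspan
              have hcard := hDmin' D' (hD'sub.trans ((Finset.erase_subset _ _).trans hDC)) hD'sum
              have hcard2 := Finset.card_le_card hD'sub
              have hcard3 := Finset.card_erase_of_mem heD
              have hDpos : 0 < D.card := Finset.card_pos.mpr ⟨e, heD⟩
              omega
            rw [hrkD]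
            omega
        · have ha := M.rk_le_card D hDE
          rw [hrkD]
          omega
    -- contradiction via hNoMid
    apply hNoMid
    have hUE : U ⊆ M.E := hUZ.trans hZE
    refine ⟨M.cl U, M.cl_isCyclicFlat' hUE hUcyc, ?_, ?_⟩
    · obtain ⟨u, hu⟩ := hUne
      exact Finset.empty_ssubset.mpr ⟨u, M.subset_cl' hUE hu⟩
    · have hsub : M.cl U ⊆ Z := by
        have h := M.cl_mono' hUZ hZE
        rwa [hZcl] at h
      have hne : M.cl U ≠ Z := by
        intro h
        have h' := M.rk_cl' hUE
        rw [h] at h'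
        omega
      exact lt_of_le_of_ne hsub hne
  · intro hη
    have hZne : Z ≠ ∅ := by
      intro h
      subst h
      rw [M.rk_empty', Finset.card_empty] at hη
      omega
    refine ⟨hZne, ?_⟩
    rintro ⟨Z', ⟨hZ'E, hZ'cl, hZ'cyc⟩, h0, hZ'Z⟩
    have hZ'cycP := (M.cyc_eq_self_iff').mp hZ'cyc
    obtain ⟨e', he'⟩ := Finset.empty_ssubset.mp h0
    have hr1 : M.rk Z' + 1 ≤ Z'.card := by
      have h := M.rk_le_card (Z'.erase e') ((Finset.erase_subset _ _).trans hZ'E)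
      rw [hZ'cycP e' he', Finset.card_erase_of_mem he'] at h
      have : 0 < Z'.card := Finset.card_pos.mpr ⟨e', he'⟩
      omega
    obtain ⟨e, heZ, heZ'⟩ := Finset.exists_of_ssubset hZ'Z
    have hsubZe : Z' ⊆ Z.erase e := Finset.subset_erase.mpr ⟨hZ'Z.subset, heZ'⟩
    have hmono := M.rk_le_add' hsubZe ((Finset.erase_subset _ _).trans hZE)
    rw [hZcycP e heZ, Finset.card_erase_of_mem heZ] at hmono
    have hc1 : Z'.card + 1 ≤ Z.card := by
      have h := Finset.card_le_card hsubZe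
      rw [Finset.card_erase_of_mem heZ] at h
      have : 0 < Z.card := Finset.card_pos.mpr ⟨e, heZ⟩
      omega
    omega
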